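/- Fix d ≥ 3, 2 ≤ r ≤ d−1, and 1 ≤ i ≤ r. For t > 0 and ζ > 0, let γ_i(t; ζ) ∈ ℝ^d be the curve whose i-th coordinate is t, whose coordinates r+1, ..., d are t^2, ..., t^{d−r+1}, and whose remaining r−1 coordinates (positions 1,...,r excluding i, in increasing order) are ζ t^{d−r+2}, ζ t^{d−r+3}, ..., ζ t^d. Then for any d+1 parameter values 0 < t_1 < t_2 < ... < t_{d+1}, the points γ_i(t_1; ζ), ..., γ_i(t_{d+1}; ζ) are affinely independent; specifically, the (d+1)×(d+1) determinant F(ζ) with columns (1, γ_i(t_j; ζ)) satisfies F(ζ) = (−1)^{i−1+(r−1)(d−r)} ζ^{r−1} VD(t_1, ..., t_{d+1}) ≠ 0. -/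

import Mathlib

open Finset

/-- The perturbed moment-like curve `γ_i(t; ζ) ∈ ℝ^d` (coordinates 0-indexed,
`i` 1-indexed): coordinate `i-1` is `t`; coordinates `r, …, d-1` are
`t^2, …, t^{d-r+1}`; the remaining `r-1` coordinates are, in increasing
position order, `ζ t^{d-r+2}, …, ζ t^d`. -/
noncomputable def gammaCurve (d r i : ℕ) (ζ t : ℝ) : Fin d → ℝ := fun c =>
  if (c : ℕ) + 1 = i then t
  else if r ≤ (c : ℕ) then t ^ ((c : ℕ) - r + 2)
  else ζ * t ^ (d - r + 2 + (if (c : ℕ) + 1 < i then (c : ℕ) else (c : ℕ) - 1))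

private def expo (d r i a : ℕ) : ℕ :=
  if a = 0 then 0
  else if a = i then 1
  else if a < i then d - r + 1 + a
  else if a ≤ r then d - r + a
  else a - r + 1

open Fin.NatCast in
private lemma finRotate_pow_apply (m k : ℕ) (y : Fin (m + 1)) :
    ((finRotate (m + 1)) ^ k) y = y + (k : Fin (m + 1)) := by
  induction k with
  | zero => simp
  | succ k ih =>
    rw [pow_succ', Equiv.Perm.mul_apply, ih, finRotate_succ_apply]
    push_cast
    rw [add_assoc]

private lemma exists_perm (d r i : ℕ) (hd : 3 ≤ d) (hr2 : 2 ≤ r) (hrd : r ≤ d - 1)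
    (hi1 : 1 ≤ i) (hir : i ≤ r) :
    ∃ e : Equiv.Perm (Fin (d + 1)),
      (∀ a : Fin (d + 1), ((e a : Fin (d + 1)) : ℕ) = expo d r i (a : ℕ)) ∧
      Equiv.Perm.sign e = (-1 : ℤˣ) ^ (i - 1 + (r - 1) * (d - r)) := by
  obtain ⟨m, rfl⟩ : ∃ m, i = m + 1 := ⟨i - 1, by omega⟩
  obtain ⟨s, rfl⟩ : ∃ s, r = s + 2 := ⟨r - 2, by omega⟩
  obtain ⟨k, rfl⟩ : ∃ k, d = s + k + 3 := ⟨d - s - 3, by omega⟩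
  have hms : m ≤ s + 1 := by omega
  let f1 : Fin (s + k + 2) ≃ {x : Fin (s + k + 4) // 2 ≤ (x : ℕ)} :=
    { toFun := fun y => ⟨⟨(y : ℕ) + 2, by have := y.isLt; omega⟩, by simp⟩
      invFun := fun x => ⟨(x : ℕ) - 2, by have := x.1.isLt; have := x.2; omega⟩
      left_inv := fun y => by ext; simp
      right_inv := fun x => by
        apply Subtype.ext; apply Fin.ext; have := x.2; simp; omega }
  let f2 : Fin (m + 1) ≃ {x : Fin (s + k + 4) // 1 ≤ (x : ℕ) ∧ (x : ℕ) ≤ m + 1} :=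
    { toFun := fun y => ⟨⟨(y : ℕ) + 1, by have := y.isLt; omega⟩,
        by simp; have := y.isLt; omega⟩
      invFun := fun x => ⟨(x : ℕ) - 1, by have := x.2; omega⟩
      left_inv := fun y => by ext; simp
      right_inv := fun x => by
        apply Subtype.ext; apply Fin.ext; have := x.2; simp; omega }
  set σ : Equiv.Perm (Fin (s + k + 4)) :=
    Equiv.Perm.extendDomain (finRotate (m + 1)) f2 with hσdef
  set e1 : Equiv.Perm (Fin (s + k + 4)) :=
    Equiv.Perm.extendDomain ((finRotate (s + k + 2)) ^ (k + 1)) f1 with he1def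
  have hσ : ∀ x : Fin (s + k + 4), ((σ x : Fin (s + k + 4)) : ℕ) =
      if (x : ℕ) = m + 1 then 1
      else if 1 ≤ (x : ℕ) ∧ (x : ℕ) ≤ m then (x : ℕ) + 1 else (x : ℕ) := by
    intro x
    by_cases h : 1 ≤ (x : ℕ) ∧ (x : ℕ) ≤ m + 1
    · rw [hσdef, Equiv.Perm.extendDomain_apply_subtype _ f2 h]
      have hval : ((f2 ((finRotate (m + 1)) (f2.symm ⟨x, h⟩)) : Fin (s + k + 4)) : ℕ)
          = ((finRotate (m + 1)) (⟨(x : ℕ) - 1, by omega⟩ : Fin (m + 1)) : ℕ) + 1 := rfl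
      rw [hval, finRotate_succ_apply]
      simp only [Fin.add_def, Fin.val_mk, Fin.val_one']
      rcases Nat.eq_zero_or_pos m with hm | hm
      · subst hm
        have : (x : ℕ) = 1 := by omega
        simp [this]
      · have h1 : 1 % (m + 1) = 1 := Nat.mod_eq_of_lt (by omega)
        rw [h1]
        by_cases hx : (x : ℕ) = m + 1
        · rw [if_pos hx]
          have h2 : (x : ℕ) - 1 + 1 = m + 1 := by omega
          rw [h2, Nat.mod_self]
        · rw [if_neg hx, if_pos (by omega)]
          have h2 : (x : ℕ) - 1 + 1 = (x : ℕ) := by omega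
          rw [h2, Nat.mod_eq_of_lt (by omega)]
    · rw [hσdef, Equiv.Perm.extendDomain_apply_not_subtype _ f2 h,
        if_neg (by omega), if_neg (by omega)]
  have he1 : ∀ x : Fin (s + k + 4), ((e1 x : Fin (s + k + 4)) : ℕ) =
      if 2 ≤ (x : ℕ) then ((x : ℕ) - 2 + (k + 1)) % (s + k + 2) + 2 else (x : ℕ) := by
    intro x
    by_cases h : 2 ≤ (x : ℕ)
    · rw [he1def, Equiv.Perm.extendDomain_apply_subtype _ f1 h, if_pos h]
      have hval : ((f1 (((finRotate (s + k + 2)) ^ (k + 1)) (f1.symm ⟨x, h⟩)) : Fin (s + k + 4)) : ℕ)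
          = ((((finRotate (s + k + 2)) ^ (k + 1)) (⟨(x : ℕ) - 2, by omega⟩ : Fin (s + k + 2))) : ℕ) + 2 := rfl
      rw [hval, finRotate_pow_apply (s + k + 1) (k + 1)]
      simp only [Fin.add_def, Fin.val_mk, Fin.val_natCast]
      rw [Nat.mod_eq_of_lt (a := k + 1) (by omega)]
    · rw [he1def, Equiv.Perm.extendDomain_apply_not_subtype _ f1 h, if_neg h]
  refine ⟨e1 * σ, ?_, ?_⟩
  · intro a
    have hlt := a.isLt
    rw [Equiv.Perm.mul_apply]
    unfold expo
    rcases Nat.lt_or_ge (a : ℕ) 1 with h0 | h0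
    · have ha : (a : ℕ) = 0 := by omega
      have hs : ((σ a : Fin (s + k + 4)) : ℕ) = 0 := by
        rw [hσ a, if_neg (by omega), if_neg (by omega)]; omega
      rw [he1, hs, if_neg (by omega), if_pos ha]
    · rcases Nat.lt_or_ge (a : ℕ) (m + 1) with h1 | h1
      · have hs : ((σ a : Fin (s + k + 4)) : ℕ) = (a : ℕ) + 1 := by
          rw [hσ a, if_neg (by omega), if_pos (by omega)]
        rw [he1, hs, if_pos (by omega), Nat.mod_eq_of_lt (by omega),
          if_neg (by omega), if_neg (by omega), if_pos (by omega)]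
        omega
      · rcases Nat.eq_or_lt_of_le h1 with h2 | h2
        · have hs : ((σ a : Fin (s + k + 4)) : ℕ) = 1 := by
            rw [hσ a, if_pos h2.symm]
          rw [he1, hs, if_neg (by omega), if_neg (by omega), if_pos h2.symm]
        · have hs : ((σ a : Fin (s + k + 4)) : ℕ) = (a : ℕ) := by
            rw [hσ a, if_neg (by omega), if_neg (by omega)]
          rcases Nat.lt_or_ge (a : ℕ) (s + 3) with h3 | h3
          · rw [he1, hs, if_pos (by omega), Nat.mod_eq_of_lt (by omega),
              if_neg (by omega), if_neg (by omega), if_neg (by omega), if_pos (by omega)]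
            omega
          · rw [he1, hs, if_pos (by omega), Nat.mod_eq_sub_mod (by omega),
              Nat.mod_eq_of_lt (by omega), if_neg (by omega), if_neg (by omega),
              if_neg (by omega), if_neg (by omega)]
            omega
  · have h1 : Equiv.Perm.sign σ = (-1 : ℤˣ) ^ m := by
      rw [hσdef, Equiv.Perm.sign_extendDomain, sign_finRotate, show m + 1 - 1 = m by omega]
    have h2 : Equiv.Perm.sign e1 = (-1 : ℤˣ) ^ ((s + k + 1) * (k + 1)) := by
      rw [he1def, Equiv.Perm.sign_extendDomain, map_pow, sign_finRotate, ← pow_mul,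
        show s + k + 2 - 1 = s + k + 1 by omega]
    rw [map_mul, h1, h2, ← pow_add]
    have he1' : m + 1 - 1 = m := by omega
    have he2' : s + 2 - 1 = s + 1 := by omega
    have he3' : s + k + 3 - (s + 2) = k + 1 := by omega
    rw [he1', he2', he3']
    obtain ⟨c, hc⟩ : Even (k * (k + 1)) := Nat.even_mul_succ_self k
    have hE : (s + k + 1) * (k + 1) + m = (m + (s + 1) * (k + 1)) + (c + c) := by
      have : (s + k + 1) * (k + 1) = (s + 1) * (k + 1) + k * (k + 1) := by ring
      omega
    rw [hE, pow_add, Even.neg_one_pow ⟨c, rfl⟩, mul_one]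

/-- For `d+1` strictly increasing positive parameters, the points
`γ_i(t_j; ζ)` are affinely independent; the `(d+1)×(d+1)` determinant with
columns `(1, γ_i(t_j; ζ))` equals
`(-1)^{i-1+(r-1)(d-r)} ζ^{r-1} VD(t_1,…,t_{d+1}) ≠ 0`. -/
theorem gammaCurve_affinely_independent (d r i : ℕ)
    (hd : 3 ≤ d) (hr2 : 2 ≤ r) (hrd : r ≤ d - 1) (hi1 : 1 ≤ i) (hir : i ≤ r)
    (ζ : ℝ) (hζ : 0 < ζ) (t : Fin (d + 1) → ℝ)
    (htpos : ∀ j, 0 < t j) (htmono : StrictMono t) :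
    (Matrix.of fun a b : Fin (d + 1) =>
        if h : (a : ℕ) = 0 then (1 : ℝ)
        else gammaCurve d r i ζ (t b) ⟨(a : ℕ) - 1, by
          have := a.isLt; omega⟩).det =
      (-1 : ℝ) ^ (i - 1 + (r - 1) * (d - r)) * ζ ^ (r - 1) *
        ∏ j : Fin (d + 1), ∏ k ∈ Finset.Ioi j, (t k - t j) ∧
    (Matrix.of fun a b : Fin (d + 1) =>
        if h : (a : ℕ) = 0 then (1 : ℝ)
        else gammaCurve d r i ζ (t b) ⟨(a : ℕ) - 1, by
          have := a.isLt; omega⟩).det ≠ 0 := by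
  obtain ⟨e, he, hsign⟩ := exists_perm d r i hd hr2 hrd hi1 hir
  set w : Fin (d + 1) → ℝ :=
    fun a => if 1 ≤ (a : ℕ) ∧ (a : ℕ) ≤ r ∧ (a : ℕ) ≠ i then ζ else 1 with hw
  have hM : (Matrix.of fun a b : Fin (d + 1) =>
        if h : (a : ℕ) = 0 then (1 : ℝ)
        else gammaCurve d r i ζ (t b) ⟨(a : ℕ) - 1, by
          have := a.isLt; omega⟩) =
      Matrix.of (fun a b : Fin (d + 1) =>
        w a * ((Matrix.vandermonde t).transpose.submatrix e id) a b) := by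
    ext a b
    have hlt := a.isLt
    simp only [Matrix.of_apply, Matrix.submatrix_apply, Matrix.transpose_apply,
      Matrix.vandermonde_apply, id, he a, hw]
    by_cases h0 : (a : ℕ) = 0
    · rw [dif_pos h0]
      unfold expo
      rw [if_pos h0, if_neg (by omega), one_mul, pow_zero]
    · rw [dif_neg h0]
      simp only [gammaCurve, expo, Fin.val_mk]
      split_ifs <;>
        first
          | omega
          | (rw [one_mul, pow_one])
          | (rw [one_mul]; congr 1; omega)
          | (congr 1; congr 1; omega)
  have hprod : (∏ a : Fin (d + 1), w a) = ζ ^ (r - 1) := by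
    have h1 : (∏ a : Fin (d + 1), w a)
        = ∏ n ∈ Finset.range (d + 1), (if 1 ≤ n ∧ n ≤ r ∧ n ≠ i then ζ else 1) := by
      rw [← Fin.prod_univ_eq_prod_range (fun n => if 1 ≤ n ∧ n ≤ r ∧ n ≠ i then ζ else 1) (d + 1)]
    rw [h1, Finset.prod_ite, Finset.prod_const, Finset.prod_const_one, mul_one]
    congr 1
    have h2 : (Finset.range (d + 1)).filter (fun n => 1 ≤ n ∧ n ≤ r ∧ n ≠ i)
        = (Finset.Icc 1 r).erase i := by
      ext n
      simp only [Finset.mem_filter, Finset.mem_range, Finset.mem_erase, Finset.mem_Icc]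
      constructor
      · rintro ⟨_, h1, h2, h3⟩; exact ⟨h3, h1, h2⟩
      · rintro ⟨h3, h1, h2⟩; exact ⟨by omega, h1, h2, h3⟩
    rw [h2, Finset.card_erase_of_mem (by simp only [Finset.mem_Icc]; omega), Nat.card_Icc]
    omega
  have hdet : (Matrix.of fun a b : Fin (d + 1) =>
        if h : (a : ℕ) = 0 then (1 : ℝ)
        else gammaCurve d r i ζ (t b) ⟨(a : ℕ) - 1, by
          have := a.isLt; omega⟩).det =
      (-1 : ℝ) ^ (i - 1 + (r - 1) * (d - r)) * ζ ^ (r - 1) *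
        ∏ j : Fin (d + 1), ∏ k ∈ Finset.Ioi j, (t k - t j) := by
    rw [hM, Matrix.det_mul_column w _, hprod, Matrix.det_permute e,
      Matrix.det_transpose, Matrix.det_vandermonde, hsign]
    push_cast
    ring
  refine ⟨hdet, ?_⟩
  rw [hdet]
  have hVD : 0 < ∏ j : Fin (d + 1), ∏ k ∈ Finset.Ioi j, (t k - t j) :=
    Finset.prod_pos fun j _ => Finset.prod_pos fun k hk =>
      sub_pos.2 (htmono (Finset.mem_Ioi.1 hk))
  have : (-1 : ℝ) ^ (i - 1 + (r - 1) * (d - r)) ≠ 0 := by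
    apply pow_ne_zero; norm_num
  positivity
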